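/- Let D be a finite-dimensional algebra over a field k and A a unital subalgebra of D. Suppose the restriction functor Res^D_A : mod(D) → mod(A) is fully faithful and sends every simple D-module to a simple A-module. Then A = D. -/

import Mathlib

universe u

private noncomputable def drk (k : Type u) [Field k] (D : Type u) [Ring D] [Algebra k D]
    (M : Type u) [AddCommGroup M] [Module D M] : ℕ :=
  letI : Module k M := Module.compHom M (algebraMap k D)
  Module.finrank k M

private theorem key (k : Type u) [Field k] (D : Type u) [Ring D] [Algebra k D]
    [FiniteDimensional k D] (A : Subalgebra k D)
    (hff : ∀ (M N : ModuleCat.{u} D), Module.Finite D M → Module.Finite D N →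
      ∀ g : (M : Type u) →+ (N : Type u),
        (∀ (a : A) (m : M), g ((a : D) • m) = (a : D) • g m) →
          ∃! f : (M : Type u) →ₗ[D] (N : Type u), ∀ m : M, f m = g m)
    (hsimple : ∀ M : ModuleCat.{u} D, IsSimpleModule D M →
      (Nontrivial M ∧ ∀ S : AddSubgroup (M : Type u),
        (∀ (a : A), ∀ m ∈ S, (a : D) • m ∈ S) → S = ⊥ ∨ S = ⊤)) :
    ∀ (n : ℕ) (M : Type u) [AddCommGroup M] [Module D M], Module.Finite D M →
      drk k D M ≤ n →
      ∀ S : AddSubgroup M, (∀ a : A, ∀ m ∈ S, (a : D) • m ∈ S) →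
        ∀ d : D, ∀ m ∈ S, d • m ∈ S := by
  intro n
  induction n with
  | zero =>
    intro M _ _ hfin hrank S hS d m hm
    letI : Module k M := Module.compHom M (algebraMap k D)
    haveI : IsScalarTower k D M := IsScalarTower.of_algebraMap_smul fun r x => rfl
    haveI : Module.Finite k M := Module.Finite.trans D M
    have h0 : Module.finrank k M = 0 := Nat.le_zero.mp hrank
    haveI : Subsingleton M := Module.finrank_zero_iff.mp h0
    rwa [Subsingleton.elim (d • m) m]
  | succ n ih =>
    intro M _ _ hfin hrank S hS d m hm
    letI : Module k M := Module.compHom M (algebraMap k D)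
    haveI : IsScalarTower k D M := IsScalarTower.of_algebraMap_smul fun r x => rfl
    haveI : Module.Finite k M := Module.Finite.trans D M
    by_cases htriv : Subsingleton M
    · rwa [Subsingleton.elim (d • m) m]
    haveI : Nontrivial M := not_subsingleton_iff_nontrivial.mp htriv
    haveI : IsArtinian D M := isArtinian_of_tower k inferInstance
    haveI : IsNoetherian D M := isNoetherian_of_tower k inferInstance
    -- find a simple submodule N
    have hatomic : IsAtomic (Submodule D M) :=
      isAtomic_of_orderBot_wellFounded_lt (IsWellFounded.wf (α := Submodule D M) (r := (· < ·)))
    have htopbot : (⊤ : Submodule D M) ≠ ⊥ := by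
      obtain ⟨x, hx⟩ := exists_ne (0 : M)
      intro h
      exact hx ((Submodule.eq_bot_iff _).mp h x trivial)
    obtain ⟨N, hN, -⟩ := (hatomic.eq_bot_or_exists_atom_le ⊤).resolve_left htopbot
    have hNsimple : IsSimpleModule D ↥N := isSimpleModule_iff_isAtom.mpr hN
    -- quotient module
    letI : Module k (M ⧸ N) := Module.compHom (M ⧸ N) (algebraMap k D)
    haveI : IsScalarTower k D (M ⧸ N) := IsScalarTower.of_algebraMap_smul fun r x => rfl
    have hsurj : Function.Surjective N.mkQ := Submodule.mkQ_surjective N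
    haveI hQfin : Module.Finite D (M ⧸ N) := Module.Finite.of_surjective N.mkQ hsurj
    haveI : Module.Finite k (M ⧸ N) :=
      Module.Finite.of_surjective (N.mkQ.restrictScalars k) hsurj
    -- rank goes down
    have hrk : Module.finrank k (M ⧸ N) < Module.finrank k M := by
      have h1 := LinearMap.finrank_range_add_finrank_ker (N.mkQ.restrictScalars k)
      have h2 : LinearMap.range (N.mkQ.restrictScalars k) = ⊤ :=
        LinearMap.range_eq_top.mpr hsurj
      rw [h2, finrank_top] at h1
      have h3 : 0 < Module.finrank k ↥(LinearMap.ker (N.mkQ.restrictScalars k)) := by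
        obtain ⟨y, hyN, hy0⟩ := (Submodule.ne_bot_iff N).mp hN.1
        have hyker : y ∈ LinearMap.ker (N.mkQ.restrictScalars k) := by
          simp [LinearMap.mem_ker, Submodule.Quotient.mk_eq_zero, hyN]
        haveI : Nontrivial ↥(LinearMap.ker (N.mkQ.restrictScalars k)) :=
          nontrivial_of_ne ⟨y, hyker⟩ 0 (by intro h; exact hy0 (congrArg Subtype.val h))
        exact Module.finrank_pos
      omega
    have hQle : drk k D (M ⧸ N) ≤ n := by
      have e1 : drk k D (M ⧸ N) = Module.finrank k (M ⧸ N) := rfl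
      have e2 : drk k D M = Module.finrank k M := rfl
      omega
    -- the image of S in the quotient
    set Sbar : AddSubgroup (M ⧸ N) := S.map N.mkQ.toAddMonoidHom with hSbar_def
    have hmemSbar : ∀ x ∈ S, N.mkQ x ∈ Sbar := fun x hx => ⟨x, hx, rfl⟩
    have hSbarA : ∀ a : A, ∀ x ∈ Sbar, (a : D) • x ∈ Sbar := by
      rintro a x ⟨y, hy, rfl⟩
      exact ⟨(a : D) • y, hS a y hy, (map_smul N.mkQ _ y).symm⟩
    have hSbarD : ∀ c : D, ∀ x ∈ Sbar, c • x ∈ Sbar := by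
      intro c x hx
      exact ih (M ⧸ N) hQfin hQle Sbar hSbarA c x hx
    -- S ∩ N is an A-stable subgroup of the simple module N
    have hcase := (hsimple (ModuleCat.of D ↥N) hNsimple).2
      (S.comap (N.subtype.toAddMonoidHom)) (by
        intro a x hx
        refine AddSubgroup.mem_comap.mpr ?_
        exact hS a _ (AddSubgroup.mem_comap.mp hx))
    rcases hcase with hbot | htop
    · -- S ∩ N = ⊥ : use full faithfulness to see S is the image of a D-linear map
      have hdisj : ∀ x, x ∈ S → x ∈ N → x = 0 := by
        intro x hxS hxN
        have : (⟨x, hxN⟩ : ↥N) ∈ S.comap (N.subtype.toAddMonoidHom) := by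
          simpa [AddSubgroup.mem_comap] using hxS
        rw [hbot] at this
        simpa using congrArg Subtype.val this
      have hinj : ∀ x y, x ∈ S → y ∈ S → N.mkQ x = N.mkQ y → x = y := by
        intro x y hx hy hxy
        have hsub : x - y ∈ N := by
          rwa [Submodule.mkQ_apply, Submodule.mkQ_apply, Submodule.Quotient.eq] at hxy
        have := hdisj (x - y) (S.sub_mem hx hy) hsub
        exact sub_eq_zero.mp this
      let T : Submodule D (M ⧸ N) :=
        { carrier := Sbar
          add_mem' := fun h1 h2 => Sbar.add_mem h1 h2
          zero_mem' := Sbar.zero_mem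
          smul_mem' := fun c x hx => hSbarD c x hx }
      haveI : IsNoetherian k (M ⧸ N) := inferInstance
      haveI : IsNoetherian D (M ⧸ N) := isNoetherian_of_tower k inferInstance
      haveI hTfin : Module.Finite D ↥T := Module.Finite.iff_fg.mpr (IsNoetherian.noetherian T)
      let ψ : S →+ ↥T :=
        { toFun := fun s => ⟨N.mkQ s, hmemSbar s s.2⟩
          map_zero' := by ext; simp
          map_add' := fun s t => by ext; simp }
      have hψbij : Function.Bijective ψ := by
        constructor
        · intro s t hst
          have : N.mkQ (s : M) = N.mkQ (t : M) := congrArg Subtype.val hst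
          exact Subtype.ext (hinj _ _ s.2 t.2 this)
        · rintro ⟨x, hx⟩
          obtain ⟨y, hy, rfl⟩ := hx
          exact ⟨⟨y, hy⟩, rfl⟩
      let e : S ≃+ ↥T := AddEquiv.ofBijective ψ hψbij
      let σ : ↥T →+ M := (S.subtype).comp e.symm.toAddMonoidHom
      have hσS : ∀ t : ↥T, σ t ∈ S := fun t => (e.symm t).2
      have hσmk : ∀ t : ↥T, N.mkQ (σ t) = (t : M ⧸ N) := by
        intro t
        exact congrArg Subtype.val (e.apply_symm_apply t)
      have hequiv : ∀ (a : A) (t : ↥T), σ ((a : D) • t) = (a : D) • σ t := by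
        intro a t
        apply hinj _ _ (hσS _) (hS a _ (hσS t))
        rw [hσmk, map_smul, hσmk]
        rfl
      obtain ⟨f, hf, -⟩ := hff (ModuleCat.of D ↥T) (ModuleCat.of D M) hTfin hfin σ hequiv
      have hmT : N.mkQ m ∈ T := hmemSbar m hm
      have hσm : σ ⟨N.mkQ m, hmT⟩ = m := hinj _ _ (hσS _) hm (by rw [hσmk])
      have h1 : f ⟨N.mkQ m, hmT⟩ = m := (hf _).trans hσm
      have h2 : f (d • (⟨N.mkQ m, hmT⟩ : ↥T)) = σ (d • (⟨N.mkQ m, hmT⟩ : ↥T)) := hf _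
      have hkey : d • m = σ (d • (⟨N.mkQ m, hmT⟩ : ↥T)) := by
        calc d • m = d • f ⟨N.mkQ m, hmT⟩ := by rw [h1]
          _ = f (d • (⟨N.mkQ m, hmT⟩ : ↥T)) := (map_smul f d _).symm
          _ = σ (d • (⟨N.mkQ m, hmT⟩ : ↥T)) := h2
      rw [hkey]
      exact hσS _
    · -- N ≤ S
      have hNS : ∀ x ∈ N, x ∈ S := by
        intro x hx
        have : (⟨x, hx⟩ : ↥N) ∈ (⊤ : AddSubgroup ↥N) := trivial
        rw [← htop] at this
        simpa [AddSubgroup.mem_comap] using this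
      have hdmS : N.mkQ (d • m) ∈ Sbar := by
        rw [map_smul]
        exact hSbarD d _ (hmemSbar m hm)
      obtain ⟨s, hs, hsm⟩ := hdmS
      have hsub : d • m - s ∈ N := by
        rw [← Submodule.Quotient.eq]
        exact hsm.symm
      have : d • m = s + (d • m - s) := by abel
      rw [this]
      exact S.add_mem hs (hNS _ hsub)

theorem stmt5 (k : Type u) [Field k] (D : Type u) [Ring D] [Algebra k D]
    [FiniteDimensional k D] (A : Subalgebra k D)
    (hff : ∀ (M N : ModuleCat.{u} D), Module.Finite D M → Module.Finite D N →
      ∀ g : (M : Type u) →+ (N : Type u),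
        (∀ (a : A) (m : M), g ((a : D) • m) = (a : D) • g m) →
          ∃! f : (M : Type u) →ₗ[D] (N : Type u), ∀ m : M, f m = g m)
    (hsimple : ∀ M : ModuleCat.{u} D, IsSimpleModule D M →
      (Nontrivial M ∧ ∀ S : AddSubgroup (M : Type u),
        (∀ (a : A), ∀ m ∈ S, (a : D) • m ∈ S) → S = ⊥ ∨ S = ⊤)) :
    A = ⊤ := by
  have hkey := key k D A hff hsimple (drk k D D) D inferInstance le_rfl
    A.toSubring.toAddSubgroup (by
      intro a x hx
      have : (a : D) * x ∈ A := A.mul_mem a.2 hx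
      simpa [smul_eq_mul] using this)
  rw [eq_top_iff]
  intro d _
  have h1 : (1 : D) ∈ A.toSubring.toAddSubgroup := A.one_mem
  have := hkey d 1 h1
  simpa [smul_eq_mul] using this
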